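/- Every natural number N can be written as the sum of three terms of the sequence (⌊n²/120⌋)_{n∈ℕ}, i.e., there exist natural numbers A, B, C with N = ⌊A²/120⌋ + ⌊B²/120⌋ + ⌊C²/120⌋. -/

import Mathlib

namespace Stmt9

lemma round_ex (w x : ℤ) (hw : 0 < w) : ∃ a : ℤ, 4*(x - a*w)^2 ≤ w^2 := by
  refine ⟨(2*x + w) / (2*w), ?_⟩
  have h2w : 0 < 2*w := by linarith
  have hmod : 0 ≤ (2*x + w) % (2*w) := Int.emod_nonneg _ (by positivity)
  have hmod2 : (2*x + w) % (2*w) < 2*w := Int.emod_lt_of_pos _ h2w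
  have hdm : (2*x + w) / (2*w) * (2*w) + (2*x + w) % (2*w) = 2*x + w :=
    Int.ediv_mul_add_emod (2*x + w) (2*w)
  set q := (2*x + w) / (2*w)
  set r := (2*x + w) % (2*w)
  have key : 2*(x - q*w) = r - w := by linarith
  have key2 : 4*(x - q*w)^2 = (r - w)^2 := by
    linear_combination (2*(x - q*w) + (r - w)) * key
  nlinarith [mul_nonneg hmod (by linarith : (0:ℤ) ≤ 2*w - r)]

lemma dc_aux (n : ℕ) : ∀ W : ℕ, ∀ w x y z : ℤ, 0 < w → w.natAbs = W →
    x^2 + y^2 + z^2 = (n:ℤ)*w^2 → ∃ a b c : ℤ, a^2 + b^2 + c^2 = (n:ℤ) := by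
  intro W
  induction W using Nat.strong_induction_on with
  | _ W ih =>
    intro w x y z hw hW hxyz
    obtain ⟨a, ha⟩ := round_ex w x hw
    obtain ⟨b, hb⟩ := round_ex w y hw
    obtain ⟨c, hc⟩ := round_ex w z hw
    by_cases hu : (x - a*w)^2 + (y - b*w)^2 + (z - c*w)^2 = 0
    · have h1 : x - a*w = 0 := by nlinarith [sq_nonneg (x-a*w), sq_nonneg (y-b*w), sq_nonneg (z-c*w)]
      have h2 : y - b*w = 0 := by nlinarith [sq_nonneg (x-a*w), sq_nonneg (y-b*w), sq_nonneg (z-c*w)]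
      have h3 : z - c*w = 0 := by nlinarith [sq_nonneg (x-a*w), sq_nonneg (y-b*w), sq_nonneg (z-c*w)]
      refine ⟨a, b, c, ?_⟩
      have hw2 : (w:ℤ)^2 ≠ 0 := pow_ne_zero _ (ne_of_gt hw)
      have hx : x = a*w := by linarith
      have hy : y = b*w := by linarith
      have hz : z = c*w := by linarith
      have hmain : (a^2+b^2+c^2) * w^2 = (n:ℤ) * w^2 := by
        rw [hx, hy, hz] at hxyz; linear_combination hxyz
      exact mul_right_cancel₀ hw2 hmain
    · have hupos : 0 < (x - a*w)^2 + (y - b*w)^2 + (z - c*w)^2 :=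
        lt_of_le_of_ne (by positivity) (Ne.symm hu)
      set w' : ℤ := (n:ℤ)*w - 2*(a*x+b*y+c*z) + w*(a^2+b^2+c^2) with hw'def
      have hww' : w * w' = (x - a*w)^2 + (y - b*w)^2 + (z - c*w)^2 := by
        rw [hw'def]; linear_combination -hxyz
      have hw'pos : 0 < w' := by
        rcases mul_pos_iff.mp (hww' ▸ hupos) with ⟨_, h⟩ | ⟨h, _⟩
        · exact h
        · linarith
      have hlt : w' < w := by nlinarith [ha, hb, hc, hww']
      have hid : (w'*a + (a^2+b^2+c^2 - n)*(x - a*w))^2 +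
                 (w'*b + (a^2+b^2+c^2 - n)*(y - b*w))^2 +
                 (w'*c + (a^2+b^2+c^2 - n)*(z - c*w))^2 = (n:ℤ)*w'^2 := by
        rw [hw'def]
        linear_combination ((a^2+b^2+c^2 - (n:ℤ))^2) * hxyz
      exact ih w'.natAbs (by omega) w' _ _ _ hw'pos rfl hid

lemma sum3sq_of_rational (n : ℕ) (w x y z : ℤ) (hw : w ≠ 0)
    (h : x^2+y^2+z^2 = (n:ℤ)*w^2) : ∃ a b c : ℤ, a^2+b^2+c^2 = (n:ℤ) := by
  rcases hw.lt_or_gt with h1 | h1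
  · exact dc_aux n (-w).natAbs (-w) x y z (by linarith) rfl (by linear_combination h)
  · exact dc_aux n w.natAbs w x y z h1 rfl h

lemma sq_mod4 (k : ℕ) : k*k % 4 = 0 ∨ k*k % 4 = 1 := by
  rcases Nat.even_or_odd k with ⟨j, hj⟩ | ⟨j, hj⟩ <;> subst hj
  · left; have : (j + j) * (j + j) = 4*(j*j) := by ring
    omega
  · right; have : (2*j + 1) * (2*j + 1) = 4*(j*j + j) + 1 := by ring
    omega

lemma pigeon (n q : ℕ) (hn : 2 ≤ n) (hq : 2 ≤ q) (τ : ℤ) :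
    ∃ x y z : ℤ, ¬(x = 0 ∧ y = 0 ∧ z = 0) ∧
      x.natAbs ≤ Nat.sqrt (2*q*n) ∧ y.natAbs ≤ Nat.sqrt n ∧ z.natAbs ≤ Nat.sqrt (2*q) ∧
      (n:ℤ) ∣ x - y ∧ (q:ℤ) ∣ x - τ*z ∧ (2:ℤ) ∣ x - z := by
  haveI : NeZero n := ⟨by omega⟩
  haveI : NeZero q := ⟨by omega⟩
  set X := Nat.sqrt (2*q*n)
  set Y := Nat.sqrt n
  set Z := Nat.sqrt (2*q)
  have hcard : Fintype.card (ZMod n × ZMod q × ZMod 2) <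
      Fintype.card (Fin (X+1) × Fin (Y+1) × Fin (Z+1)) := by
    simp only [Fintype.card_prod, ZMod.card, Fintype.card_fin]
    have h1 : 2*q*n < (X+1)*(X+1) := by have := Nat.lt_succ_sqrt' (2*q*n); nlinarith [this]
    have h2 : n < (Y+1)*(Y+1) := by have := Nat.lt_succ_sqrt' n; nlinarith [this]
    have h3 : 2*q < (Z+1)*(Z+1) := by have := Nat.lt_succ_sqrt' (2*q); nlinarith [this]
    have key : (n*(q*2)) * (n*(q*2)) < ((X+1)*((Y+1)*(Z+1))) * ((X+1)*((Y+1)*(Z+1))) := by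
      calc (n*(q*2)) * (n*(q*2)) = (2*q*n) * (n * (2*q)) := by ring
        _ < ((X+1)*(X+1)) * (((Y+1)*(Y+1)) * ((Z+1)*(Z+1))) := by
            apply Nat.mul_lt_mul_of_lt_of_le h1
            · exact Nat.mul_le_mul h2.le h3.le
            · positivity
        _ = ((X+1)*((Y+1)*(Z+1))) * ((X+1)*((Y+1)*(Z+1))) := by ring
    exact lt_of_mul_self_lt_mul_self₀ (by positivity) key
  set f : Fin (X+1) × Fin (Y+1) × Fin (Z+1) → ZMod n × ZMod q × ZMod 2 :=
    fun t => (((t.1 : ℕ) : ZMod n) - ((t.2.1 : ℕ) : ZMod n),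
              ((t.1 : ℕ) : ZMod q) - (τ : ZMod q) * ((t.2.2 : ℕ) : ZMod q),
              ((t.1 : ℕ) : ZMod 2) - ((t.2.2 : ℕ) : ZMod 2)) with hf
  obtain ⟨s, t, hst, hfeq⟩ := Fintype.exists_ne_map_eq_of_card_lt f hcard
  refine ⟨((s.1 : ℕ) : ℤ) - ((t.1 : ℕ) : ℤ), ((s.2.1 : ℕ) : ℤ) - ((t.2.1 : ℕ) : ℤ),
          ((s.2.2 : ℕ) : ℤ) - ((t.2.2 : ℕ) : ℤ), ?_, ?_, ?_, ?_, ?_, ?_, ?_⟩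
  · rintro ⟨h1, h2, h3⟩
    apply hst
    have e1 : s.1 = t.1 := by
      have : ((s.1 : ℕ) : ℤ) = ((t.1 : ℕ) : ℤ) := by linarith
      have := Int.ofNat.inj this
      exact Fin.ext this
    have e2 : s.2.1 = t.2.1 := by
      have : ((s.2.1 : ℕ) : ℤ) = ((t.2.1 : ℕ) : ℤ) := by linarith
      exact Fin.ext (Int.ofNat.inj this)
    have e3 : s.2.2 = t.2.2 := by
      have : ((s.2.2 : ℕ) : ℤ) = ((t.2.2 : ℕ) : ℤ) := by linarith
      exact Fin.ext (Int.ofNat.inj this)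
    exact Prod.ext e1 (Prod.ext e2 e3)
  · have h1 : (s.1 : ℕ) ≤ X := Fin.is_le s.1
    have h2 : (t.1 : ℕ) ≤ X := Fin.is_le t.1
    omega
  · have h1 : (s.2.1 : ℕ) ≤ Y := Fin.is_le s.2.1
    have h2 : (t.2.1 : ℕ) ≤ Y := Fin.is_le t.2.1
    omega
  · have h1 : (s.2.2 : ℕ) ≤ Z := Fin.is_le s.2.2
    have h2 : (t.2.2 : ℕ) ≤ Z := Fin.is_le t.2.2
    omega
  · have h1 := congrArg Prod.fst hfeq
    simp only [hf] at h1
    rw [← ZMod.intCast_zmod_eq_zero_iff_dvd]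
    push_cast
    linear_combination h1
  · have h2 := congrArg (fun p => p.2.1) hfeq
    simp only [hf] at h2
    rw [← ZMod.intCast_zmod_eq_zero_iff_dvd]
    push_cast
    linear_combination h2
  · have h3 := congrArg (fun p => p.2.2) hfeq
    simp only [hf] at h3
    have := (ZMod.intCast_zmod_eq_zero_iff_dvd
      (((s.1 : ℕ) : ℤ) - ((t.1 : ℕ) : ℤ) - (((s.2.2 : ℕ) : ℤ) - ((t.2.2 : ℕ) : ℤ))) 2).mp
      (by push_cast; linear_combination h3)
    exact_mod_cast this

lemma not_sq_two_mul_odd {m : ℕ} (k : ℕ) (hm : m % 2 = 1) : k * k ≠ 2*m := by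
  intro h
  have h4 : (2*m) % 4 = 2 := by omega
  rcases sq_mod4 k with h' | h' <;> omega

lemma sqrt_mul_self_le (m : ℕ) : Nat.sqrt m * Nat.sqrt m ≤ m := by
  have := Nat.sqrt_le' m
  rwa [pow_two] at this

set_option maxHeartbeats 1000000 in
lemma legendre_step (n q : ℕ) (hsf : Squarefree n) (hn8 : n % 8 = 3)
    (hq : q.Prime) (hqn : n < q) (hq4 : q % 4 = 1) (hdvd : n ∣ 2*q+1)
    (τ : ℤ) (hτ : (q:ℤ) ∣ τ^2 - (n:ℤ)) :
    ∃ X Y Z : ℤ, Z ≠ 0 ∧ X^2 + 2*(q:ℤ)*Y^2 = (n:ℤ)*Z^2 := by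
  have hn3 : 3 ≤ n := by omega
  have hn2 : n % 2 = 1 := by omega
  have hq2' : 2 ≤ q := hq.two_le
  have hqodd : q % 2 = 1 := by
    rcases Nat.Prime.eq_two_or_odd hq with h | h
    · omega
    · exact h
  obtain ⟨x, y, z, hnz, hxb, hyb, hzb, hd1, hd2, hd3⟩ := pigeon n q (by omega) hq2' τ
  -- strict bounds on squares
  have hqnodd : (q*n) % 2 = 1 := by
    rw [Nat.mul_mod, hn2, hqodd]
  have hsq1 : x^2 < 2*(q:ℤ)*n := by
    have h1 : x.natAbs * x.natAbs ≤ Nat.sqrt (2*q*n) * Nat.sqrt (2*q*n) :=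
      Nat.mul_le_mul hxb hxb
    have h2 : Nat.sqrt (2*q*n) * Nat.sqrt (2*q*n) ≤ 2*q*n := sqrt_mul_self_le (2*q*n)
    have h3 : Nat.sqrt (2*q*n) * Nat.sqrt (2*q*n) ≠ 2*q*n := by
      have e : 2*q*n = 2*(q*n) := by ring
      rw [e]
      exact not_sq_two_mul_odd _ hqnodd
    have h4 : x.natAbs * x.natAbs < 2*q*n := by omega
    have := (Int.natAbs_mul_self' x)
    calc x^2 = (x.natAbs : ℤ) * (x.natAbs : ℤ) := by rw [this]; ring
      _ < 2*(q:ℤ)*n := by exact_mod_cast h4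
  have hsq2 : y^2 < (n:ℤ) := by
    have h2 : Nat.sqrt n * Nat.sqrt n ≤ n := sqrt_mul_self_le n
    have h3 : Nat.sqrt n * Nat.sqrt n ≠ n := by
      intro hcontra
      have : IsUnit (Nat.sqrt n) := hsf _ (dvd_of_eq hcontra)
      rw [Nat.isUnit_iff] at this
      rw [this] at hcontra
      omega
    have h4 : y.natAbs * y.natAbs < n := by
      have := Nat.mul_le_mul hyb hyb; omega
    have := (Int.natAbs_mul_self' y)
    calc y^2 = (y.natAbs : ℤ) * (y.natAbs : ℤ) := by rw [this]; ring
      _ < (n:ℤ) := by exact_mod_cast h4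
  have hsq3 : z^2 < 2*(q:ℤ) := by
    have h2 : Nat.sqrt (2*q) * Nat.sqrt (2*q) ≤ 2*q := sqrt_mul_self_le (2*q)
    have h3 : Nat.sqrt (2*q) * Nat.sqrt (2*q) ≠ 2*q := not_sq_two_mul_odd _ hqodd
    have h4 : z.natAbs * z.natAbs < 2*q := by
      have := Nat.mul_le_mul hzb hzb; omega
    have := (Int.natAbs_mul_self' z)
    calc z^2 = (z.natAbs : ℤ) * (z.natAbs : ℤ) := by rw [this]; ring
      _ < 2*(q:ℤ) := by exact_mod_cast h4
  -- divisibility of F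
  have hdvdZ : ((n:ℤ)) ∣ ((2*q+1 : ℕ) : ℤ) := Int.natCast_dvd_natCast.mpr hdvd
  have hFn : (n:ℤ) ∣ x^2 + 2*q*y^2 - n*z^2 := by
    have e : x^2 + 2*(q:ℤ)*y^2 - n*z^2 = (x-y)*(x+y) + ((2*q+1 : ℕ) : ℤ)*y^2 - n*z^2 := by
      push_cast; ring
    rw [e]
    exact dvd_sub (dvd_add (Dvd.dvd.mul_right hd1 _) (Dvd.dvd.mul_right hdvdZ _))
      (Dvd.dvd.mul_right (dvd_refl _) _)
  have hFq : (q:ℤ) ∣ x^2 + 2*q*y^2 - n*z^2 := by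
    have e : x^2 + 2*(q:ℤ)*y^2 - n*z^2 = (x-τ*z)*(x+τ*z) + (τ^2 - n)*z^2 + (q:ℤ)*(2*y^2) := by
      ring
    rw [e]
    exact dvd_add (dvd_add (Dvd.dvd.mul_right hd2 _) (Dvd.dvd.mul_right hτ _))
      (Dvd.dvd.mul_right (dvd_refl _) _)
  have hF2 : (2:ℤ) ∣ x^2 + 2*q*y^2 - n*z^2 := by
    have h1n : (2:ℤ) ∣ (1 - (n:ℤ)) := by omega
    have e : x^2 + 2*(q:ℤ)*y^2 - n*z^2 = (x-z)*(x+z) + (1 - (n:ℤ))*z^2 + 2*((q:ℤ)*y^2) := by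
      ring
    rw [e]
    exact dvd_add (dvd_add (Dvd.dvd.mul_right hd3 _) (Dvd.dvd.mul_right h1n _))
      (Dvd.dvd.mul_right (dvd_refl _) _)
  -- combine
  have hqndvd : ¬ q ∣ n := fun h => by have := Nat.le_of_dvd (by omega) h; omega
  have hcop1 : IsCoprime (n:ℤ) (q:ℤ) := by
    rw [Int.isCoprime_iff_gcd_eq_one]
    have h : Nat.Coprime n q := ((Nat.Prime.coprime_iff_not_dvd hq).mpr hqndvd).symm
    rw [Int.gcd_natCast_natCast]
    exact h
  have hcop2 : IsCoprime (2:ℤ) ((n:ℤ)*(q:ℤ)) := by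
    have hnat : Nat.Coprime 2 (n*q) := by
      rw [Nat.coprime_comm]
      apply Nat.Coprime.symm
      apply (Nat.Prime.coprime_iff_not_dvd Nat.prime_two).mpr
      intro h
      rw [Nat.mul_comm] at h
      omega
    have h2 : IsCoprime ((2:ℕ):ℤ) (((n*q) : ℕ) : ℤ) := by
      rw [Int.isCoprime_iff_gcd_eq_one, Int.gcd_natCast_natCast]
      exact hnat
    push_cast at h2
    exact h2
  have hFnq : ((n:ℤ)*(q:ℤ)) ∣ x^2 + 2*q*y^2 - n*z^2 := hcop1.mul_dvd hFn hFq
  have htot : ((2:ℤ)*((n:ℤ)*(q:ℤ))) ∣ x^2 + 2*q*y^2 - n*z^2 := hcop2.mul_dvd hF2 hFnq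
  obtain ⟨k, hk⟩ := htot
  have hnqpos : (0:ℤ) < 2*((n:ℤ)*(q:ℤ)) := by positivity
  have hkbound : k = 0 ∨ k = 1 := by
    have hub : x^2 + 2*(q:ℤ)*y^2 - n*z^2 < 4*((n:ℤ)*q) := by nlinarith [sq_nonneg z]
    have hlb : -(2*((n:ℤ)*q)) < x^2 + 2*(q:ℤ)*y^2 - n*z^2 := by nlinarith [sq_nonneg x, sq_nonneg y]
    rw [hk] at hub hlb
    have hk2 : k < 2 := by nlinarith
    have hk0 : -1 < k := by nlinarith
    omega
  rcases hkbound with hk0 | hk1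
  · -- F = 0
    rw [hk0, mul_zero] at hk
    have heq : x^2 + 2*(q:ℤ)*y^2 = (n:ℤ)*z^2 := by linarith [sub_eq_zero.mp hk]
    refine ⟨x, y, z, ?_, heq⟩
    intro hz0
    rw [hz0] at heq
    simp only [ne_eq, OfNat.ofNat_ne_zero, not_false_eq_true, zero_pow, mul_zero] at heq
    have hqpos : (0:ℤ) < 2*(q:ℤ) := by positivity
    have hq0 : (0:ℤ) ≤ 2*(q:ℤ)*y^2 := by positivity
    have hx2 : x^2 = 0 := le_antisymm (by linarith) (sq_nonneg x)
    have hy0 : y = 0 := by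
      by_contra hy
      have h1 : (0:ℤ) < y^2 := by positivity
      have h2 : (0:ℤ) < 2*(q:ℤ)*y^2 := by positivity
      linarith [sq_nonneg x]
    exact hnz ⟨pow_eq_zero_iff two_ne_zero |>.mp hx2, hy0, hz0⟩
  · -- F = 2nq
    rw [hk1, mul_one] at hk
    refine ⟨x*z + 2*q*y, y*z - x, z^2 + 2*q, by positivity, ?_⟩
    linear_combination (z^2 + 2*(q:ℤ)) * hk

open scoped NumberTheorySymbols in
lemma exists_good_prime (n : ℕ) (hn8 : n % 8 = 3) :
    ∃ q : ℕ, q.Prime ∧ n < q ∧ q % 4 = 1 ∧ n ∣ 2*q+1 ∧ ∃ τ : ℤ, (q:ℤ) ∣ τ^2 - (n:ℤ) := by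
  have hn3 : 3 ≤ n := by omega
  have hnodd : n % 2 = 1 := by omega
  have hOdd : Odd n := Nat.odd_iff.mpr hnodd
  -- build the residue class
  have hco2 : Nat.Coprime 2 n := (Nat.prime_two.coprime_iff_not_dvd).mpr (by omega)
  have hco4 : Nat.Coprime 4 n := by
    have h := Nat.Coprime.mul hco2 hco2
    simpa using h
  set v := (n-1)/2 with hv
  have hv2 : 2*v + 1 = n := by omega
  obtain ⟨R, hR1, hR2⟩ := Nat.chineseRemainder hco4 1 v
  have hR4 : R % 4 = 1 := by
    have := hR1; unfold Nat.ModEq at this; omega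
  have hRn : n ∣ 2*R + 1 := by
    have h2 : 2*R + 1 ≡ 2*v + 1 [MOD n] := (hR2.mul_left 2).add_right 1
    rw [hv2] at h2
    have h3 : 2*R + 1 ≡ 0 [MOD n] := h2.trans (Nat.modEq_zero_iff_dvd.mpr dvd_rfl)
    exact (Nat.modEq_zero_iff_dvd).mp h3
  -- R is a unit mod 4n
  have hRco : Nat.Coprime R (4*n) := by
    have hR2' : Nat.Coprime R 2 :=
      ((Nat.prime_two.coprime_iff_not_dvd).mpr (by omega)).symm
    have hR4' : Nat.Coprime R 4 := by
      have h := Nat.Coprime.mul_right hR2' hR2'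
      simpa using h
    have hRn' : Nat.Coprime R n := by
      have h1 : Nat.gcd R n ∣ 2*R + 1 := dvd_trans (Nat.gcd_dvd_right R n) hRn
      have h2 : Nat.gcd R n ∣ 2*R := Dvd.dvd.mul_left (Nat.gcd_dvd_left R n) 2
      have h3 : Nat.gcd R n ∣ 1 := by simpa using Nat.dvd_sub h1 h2
      exact Nat.dvd_one.mp h3
    exact hR4'.mul_right hRn'
  haveI : NeZero (4*n) := ⟨by omega⟩
  have hunit : IsUnit ((R : ZMod (4*n))) := (ZMod.isUnit_iff_coprime R (4*n)).mpr hRco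
  obtain ⟨q, hqn, hq, hqR⟩ := Nat.forall_exists_prime_gt_and_eq_mod hunit n
  have hqmod : q ≡ R [MOD 4*n] := (ZMod.natCast_eq_natCast_iff q R (4*n)).mp hqR
  have hq4 : q % 4 = 1 := by
    have h4 : q ≡ R [MOD 4] := hqmod.of_dvd ⟨n, rfl⟩
    unfold Nat.ModEq at h4; omega
  have hqdvd : n ∣ 2*q + 1 := by
    have hn' : q ≡ R [MOD n] := hqmod.of_dvd ⟨4, by ring⟩
    have h2 : 2*q + 1 ≡ 2*R + 1 [MOD n] := (hn'.mul_left 2).add_right 1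
    have : 2*q + 1 ≡ 0 [MOD n] := by
      calc 2*q+1 ≡ 2*R+1 [MOD n] := h2
        _ ≡ 0 [MOD n] := (Nat.modEq_zero_iff_dvd).mpr hRn
    exact (Nat.modEq_zero_iff_dvd).mp this
  haveI : Fact q.Prime := ⟨hq⟩
  have hqodd : Odd q := Nat.odd_iff.mpr (by omega)
  have hqndvd : ¬ (q:ℤ) ∣ (n:ℤ) := by
    rw [Int.natCast_dvd_natCast]
    intro h
    have := Nat.le_of_dvd (by omega) h
    omega
  -- Jacobi computation : J(q|n) = 1
  have h2n : J(2 | n) = -1 := by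
    rw [jacobiSym.at_two hOdd, ZMod.χ₈_nat_eq_if_mod_eight]
    simp [hnodd, hn8]
  have hm2n : J(-2 | n) = 1 := by
    rw [jacobiSym.at_neg_two hOdd, ZMod.χ₈'_nat_eq_if_mod_eight]
    simp [hnodd, hn8]
  have hmod : ((4*(q:ℤ))) % (n:ℤ) = (-2 : ℤ) % (n:ℤ) := by
    have hd : (n:ℤ) ∣ 4*(q:ℤ) + 2 := by
      obtain ⟨t, ht⟩ := hqdvd
      refine ⟨2*t, ?_⟩
      have h' : ((2*q+1 : ℕ) : ℤ) = ((n*t : ℕ) : ℤ) := by exact_mod_cast ht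
      push_cast at h'
      linarith
    have : Int.ModEq (n:ℤ) (4*(q:ℤ)) (-2) := Int.ModEq.symm (Int.modEq_iff_dvd.mpr
      (by rw [show (4*(q:ℤ)) - (-2) = 4*(q:ℤ) + 2 by ring]; exact hd))
    exact this
  have h4qn : J(4*(q:ℤ) | n) = J(-2 | n) := jacobiSym.mod_left' hmod
  have h4n : J(4 | n) = 1 := by
    have : J(4 | n) = J(2 | n) * J(2 | n) := by
      rw [← jacobiSym.mul_left]; norm_num
    rw [this, h2n]; ring
  have hqn1 : J(q | n) = 1 := by
    have e : J((4:ℤ)*(q:ℤ) | n) = J(4 | n) * J(q | n) := jacobiSym.mul_left 4 q n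
    have e2 : ((4:ℤ)*(q:ℤ)) = (4*q : ℤ) := by ring
    rw [e2] at e
    rw [h4qn, hm2n] at e
    rw [h4n] at e
    linarith
  -- reciprocity
  have hrec : J((q:ℕ) | n) = J((n:ℕ) | q) := jacobiSym.quadratic_reciprocity_one_mod_four hq4 hOdd
  have hnq1 : J((n:ℕ) | q) = 1 := by rw [← hrec]; exact_mod_cast hqn1
  have hleg : legendreSym q (n:ℤ) = 1 := by
    rw [jacobiSym.legendreSym.to_jacobiSym]
    exact_mod_cast hnq1
  have hne : ((n:ℤ) : ZMod q) ≠ 0 := by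
    rw [Ne, ZMod.intCast_zmod_eq_zero_iff_dvd]
    exact hqndvd
  have hsq : IsSquare (((n:ℤ)) : ZMod q) := (legendreSym.eq_one_iff q hne).mp hleg
  obtain ⟨c, hc⟩ := hsq
  refine ⟨q, hq, hqn, hq4, hqdvd, (c.val : ℤ), ?_⟩
  rw [← ZMod.intCast_zmod_eq_zero_iff_dvd]
  push_cast
  rw [ZMod.natCast_val, ZMod.cast_id]
  have hc' : ((n : ZMod q)) = c*c := by exact_mod_cast hc
  rw [hc']
  ring

lemma three_sq_sf (n : ℕ) (hsf : Squarefree n) (hn8 : n % 8 = 3) :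
    ∃ x y z : ℕ, x^2 + y^2 + z^2 = n := by
  obtain ⟨q, hq, hqn, hq4, hdvd, τ, hτ⟩ := exists_good_prime n hn8
  obtain ⟨X, Y, Z, hZ, hXYZ⟩ := legendre_step n q hsf hn8 hq hqn hq4 hdvd τ hτ
  haveI : Fact q.Prime := ⟨hq⟩
  obtain ⟨cc, dd, hcd⟩ := Nat.Prime.sq_add_sq (p := q) (by omega)
  have h2q : ((cc:ℤ)+dd)^2 + ((cc:ℤ)-dd)^2 = 2*(q:ℤ) := by
    have : ((cc:ℕ)^2 + (dd:ℕ)^2 : ℕ) = q := hcd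
    have h' : ((cc:ℤ))^2 + ((dd:ℤ))^2 = (q:ℤ) := by exact_mod_cast this
    linear_combination 2 * h'
  have hmain : X^2 + (((cc:ℤ)+dd)*Y)^2 + (((cc:ℤ)-dd)*Y)^2 = (n:ℤ)*Z^2 := by
    linear_combination hXYZ + Y^2 * h2q
  obtain ⟨a, b, c, habc⟩ := sum3sq_of_rational n Z X (((cc:ℤ)+dd)*Y) (((cc:ℤ)-dd)*Y) hZ hmain
  refine ⟨a.natAbs, b.natAbs, c.natAbs, ?_⟩
  have : ((a.natAbs^2 + b.natAbs^2 + c.natAbs^2 : ℕ) : ℤ) = ((n:ℕ) : ℤ) := by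
    push_cast
    rw [sq_abs, sq_abs, sq_abs]
    exact habc
  exact_mod_cast this

lemma odd_sq_mod8 (d : ℕ) (hd : d % 2 = 1) : d^2 % 8 = 1 := by
  obtain ⟨j, hj⟩ := Nat.odd_iff.mpr hd
  subst hj
  obtain ⟨t, ht⟩ := Nat.even_mul_succ_self j
  have h1 : (2*j+1)^2 = 8*t + 1 := by
    have : j*(j+1) = 2*t := by omega
    nlinarith [this]
  omega

theorem three_sq (m : ℕ) (h8 : m % 8 = 3) : ∃ x y z : ℕ, x^2 + y^2 + z^2 = m := by
  obtain ⟨n, d, hmd, hsf⟩ := Nat.sq_mul_squarefree m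
  have hd2 : d % 2 = 1 := by
    rcases Nat.even_or_odd d with ⟨j, hj⟩ | h
    · exfalso
      subst hj
      have : m = 4*(j*j*n) := by rw [← hmd]; ring
      omega
    · exact Nat.odd_iff.mp h
  have hdsq : d^2 % 8 = 1 := odd_sq_mod8 d hd2
  have hn8 : n % 8 = 3 := by
    obtain ⟨t, ht⟩ : ∃ t, d^2 = 8*t + 1 := ⟨d^2/8, by omega⟩
    have : m = 8*(t*n) + n := by rw [← hmd, ht]; ring
    omega
  obtain ⟨x, y, z, hxyz⟩ := three_sq_sf n hsf hn8
  refine ⟨d*x, d*y, d*z, ?_⟩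
  calc (d*x)^2 + (d*y)^2 + (d*z)^2 = d^2*(x^2+y^2+z^2) := by ring
    _ = d^2 * n := by rw [hxyz]
    _ = m := hmd

lemma mod8_odd : ∀ a b c : Fin 8,
    ((a:ℕ)^2+(b:ℕ)^2+(c:ℕ)^2) % 8 = 3 → (a:ℕ) % 2 = 1 ∧ (b:ℕ) % 2 = 1 ∧ (c:ℕ) % 2 = 1 := by decide

lemma mod9_n3 : ∀ a b c : Fin 9,
    ((a:ℕ)^2+(b:ℕ)^2+(c:ℕ)^2) % 9 = 3 → (a:ℕ) % 3 ≠ 0 ∧ (b:ℕ) % 3 ≠ 0 ∧ (c:ℕ) % 3 ≠ 0 := by decide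

lemma mod120_sq : ∀ a : Fin 120, (a:ℕ) % 2 = 1 → (a:ℕ) % 3 ≠ 0 →
    (a:ℕ)^2 % 120 = 1 ∨ (a:ℕ)^2 % 120 = 25 ∨ (a:ℕ)^2 % 120 = 49 := by decide

lemma mod8_odd_nat : ∀ a < 8, ∀ b < 8, ∀ c < 8,
    (a^2+b^2+c^2) % 8 = 3 → a % 2 = 1 ∧ b % 2 = 1 ∧ c % 2 = 1 := by
  intro a ha b hb c hc h
  exact mod8_odd ⟨a, ha⟩ ⟨b, hb⟩ ⟨c, hc⟩ h

lemma mod9_n3_nat : ∀ a < 9, ∀ b < 9, ∀ c < 9,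
    (a^2+b^2+c^2) % 9 = 3 → a % 3 ≠ 0 ∧ b % 3 ≠ 0 ∧ c % 3 ≠ 0 := by
  intro a ha b hb c hc h
  exact mod9_n3 ⟨a, ha⟩ ⟨b, hb⟩ ⟨c, hc⟩ h

lemma mod120_sq_nat : ∀ a < 120, a % 2 = 1 → a % 3 ≠ 0 →
    a^2 % 120 = 1 ∨ a^2 % 120 = 25 ∨ a^2 % 120 = 49 := by
  intro a ha h2 h3
  exact mod120_sq ⟨a, ha⟩ h2 h3

lemma sq_residue (x : ℕ) (h2 : x % 2 = 1) (h3 : x % 3 ≠ 0) :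
    x^2 % 120 = 1 ∨ x^2 % 120 = 25 ∨ x^2 % 120 = 49 := by
  have e : x^2 % 120 = (x % 120)^2 % 120 := by rw [Nat.pow_mod]
  rw [e]
  exact mod120_sq_nat (x % 120) (Nat.mod_lt _ (by norm_num)) (by omega) (by omega)

lemma sum_mod (x y z m k : ℕ) (h : x^2+y^2+z^2 = m) (hm : m % k = 3) (hk : 0 < k) :
    ((x%k)^2 + (y%k)^2 + (z%k)^2) % k = 3 := by
  have hx : (x % k) ≡ x [MOD k] := Nat.mod_modEq x k
  have hy : (y % k) ≡ y [MOD k] := Nat.mod_modEq y k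
  have hz : (z % k) ≡ z [MOD k] := Nat.mod_modEq z k
  have : (x%k)^2 + (y%k)^2 + (z%k)^2 ≡ x^2+y^2+z^2 [MOD k] :=
    ((hx.pow 2).add (hy.pow 2)).add (hz.pow 2)
  have h2 := this
  rw [h] at h2
  unfold Nat.ModEq at h2
  omega

lemma last_step (N s a b c ra rb rc : ℕ) (hsv : s = 75 ∨ s = 99 ∨ s = 51)
    (hra : ra = 1 ∨ ra = 25 ∨ ra = 49) (hrb : rb = 1 ∨ rb = 25 ∨ rb = 49)
    (hrc : rc = 1 ∨ rc = 25 ∨ rc = 49)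
    (h : 120*a + ra + (120*b + rb) + (120*c + rc) = 120*N + s) : N = a + b + c := by
  rcases hsv with h0|h0|h0 <;> rcases hra with h1|h1|h1 <;> rcases hrb with h2|h2|h2 <;>
    rcases hrc with h3|h3|h3 <;> omega

lemma final (N s : ℕ) (hsv : s = 75 ∨ s = 99 ∨ s = 51) (h9 : (120*N+s) % 9 = 3) :
    ∃ A B C : ℕ, N = A ^ 2 / 120 + B ^ 2 / 120 + C ^ 2 / 120 := by
  have hm8 : (120*N+s) % 8 = 3 := by rcases hsv with h|h|h <;> omega
  obtain ⟨x, y, z, hxyz⟩ := three_sq (120*N+s) hm8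
  have h8' := sum_mod x y z (120*N+s) 8 hxyz hm8 (by norm_num)
  obtain ⟨hx8, hy8, hz8⟩ := mod8_odd_nat (x%8) (Nat.mod_lt _ (by norm_num)) (y%8)
    (Nat.mod_lt _ (by norm_num)) (z%8) (Nat.mod_lt _ (by norm_num)) h8'
  have h9' := sum_mod x y z (120*N+s) 9 hxyz h9 (by norm_num)
  obtain ⟨hx9, hy9, hz9⟩ := mod9_n3_nat (x%9) (Nat.mod_lt _ (by norm_num)) (y%9)
    (Nat.mod_lt _ (by norm_num)) (z%9) (Nat.mod_lt _ (by norm_num)) h9'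
  have hrx := sq_residue x (by omega) (by omega)
  have hry := sq_residue y (by omega) (by omega)
  have hrz := sq_residue z (by omega) (by omega)
  refine ⟨x, y, z, ?_⟩
  have hdx := Nat.div_add_mod (x^2) 120
  have hdy := Nat.div_add_mod (y^2) 120
  have hdz := Nat.div_add_mod (z^2) 120
  exact last_step N s (x^2/120) (y^2/120) (z^2/120) (x^2 % 120) (y^2 % 120) (z^2 % 120)
    hsv hrx hry hrz (by omega)

theorem stmt_9' (N : ℕ) :
    ∃ A B C : ℕ, N = A ^ 2 / 120 + B ^ 2 / 120 + C ^ 2 / 120 := by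
  rcases (by omega : N % 3 = 0 ∨ N % 3 = 1 ∨ N % 3 = 2) with h|h|h
  · exact final N 75 (by tauto) (by omega)
  · exact final N 99 (by tauto) (by omega)
  · exact final N 51 (by tauto) (by omega)

end Stmt9

theorem stmt_9 (N : ℕ) :
    ∃ A B C : ℕ, N = A ^ 2 / 120 + B ^ 2 / 120 + C ^ 2 / 120 := by
  exact Stmt9.stmt_9' N
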